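/- Let A be a real symmetric N×N matrix whose comparison matrix A‡ is positive definite. Then for every eigenpair Av = κv with κ > 0 and v ≠ 0, and w solving A‡ w = 𝟙, one has |v_i|/‖v‖_∞ ≤ κ w_i for each i. -/

import Mathlib

open Matrix

/-- The comparison matrix `A‡`: diagonal entries `|A i i|`, off-diagonal entries `-|A i j|`. -/
def compMat {N : ℕ} (A : Matrix (Fin N) (Fin N) ℝ) : Matrix (Fin N) (Fin N) ℝ :=
  fun i j => if i = j then |A i i| else -|A i j|

/-- A positive definite matrix with nonpositive off-diagonal entries (a PD Z-matrix)
is monotone: `B x ≥ 0` entrywise implies `x ≥ 0` entrywise. -/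
lemma posdef_Z_monotone {N : ℕ} (B : Matrix (Fin N) (Fin N) ℝ) (hB : B.PosDef)
    (hoff : ∀ i j, i ≠ j → B i j ≤ 0) (x : Fin N → ℝ)
    (hx : ∀ i, 0 ≤ (B *ᵥ x) i) : ∀ i, 0 ≤ x i := by
  set m : Fin N → ℝ := fun i => max (-x i) 0 with hm
  set p : Fin N → ℝ := fun i => max (x i) 0 with hp
  have hxpm : ∀ j, x j = p j - m j := by
    intro j
    rcases le_total (x j) 0 with h | h
    · simp [hp, hm, max_eq_right h, max_eq_left (neg_nonneg.mpr h)]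
    · simp [hp, hm, max_eq_left h, max_eq_right (neg_nonpos.mpr h)]
  have hmp : ∀ j, m j * p j = 0 := by
    intro j
    rcases le_total (x j) 0 with h | h
    · simp [hp, hm, max_eq_right h]
    · simp [hm, max_eq_right (neg_nonpos.mpr h)]
  have hm0 : m = 0 := by
    by_contra hne
    have hpos : 0 < m ⬝ᵥ (B *ᵥ m) := by simpa using hB.dotProduct_mulVec_pos hne
    have h1 : 0 ≤ m ⬝ᵥ (B *ᵥ x) :=
      Finset.sum_nonneg fun i _ => mul_nonneg (le_max_right _ _) (hx i)
    have hsplit : m ⬝ᵥ (B *ᵥ x) = m ⬝ᵥ (B *ᵥ p) - m ⬝ᵥ (B *ᵥ m) := by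
      have : x = p - m := funext fun j => by simp [hxpm j]
      rw [this, mulVec_sub, dotProduct_sub]
    have h2 : m ⬝ᵥ (B *ᵥ p) ≤ 0 := by
      apply Finset.sum_nonpos
      intro i _
      unfold mulVec dotProduct
      rw [Finset.mul_sum]
      apply Finset.sum_nonpos
      intro j _
      by_cases hij : i = j
      · subst hij
        rcases mul_eq_zero.mp (hmp i) with h | h <;> simp [h]
      · have h3 : B i j ≤ 0 := hoff i j hij
        have h4 : 0 ≤ m i := le_max_right _ _
        have h5 : 0 ≤ p j := le_max_right _ _
        have h6 : B i j * p j ≤ 0 := mul_nonpos_of_nonpos_of_nonneg h3 h5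
        exact mul_nonpos_iff.mpr (Or.inl ⟨h4, h6⟩)
    linarith [hsplit ▸ h1]
  intro i
  have h : max (-x i) 0 = 0 := by simpa [hm] using congrFun hm0 i
  have h2 : -x i ≤ (0:ℝ) := h ▸ le_max_left (-x i) 0
  linarith

theorem stmt_19 {N : ℕ} (A : Matrix (Fin N) (Fin N) ℝ) (hsym : A.IsSymm)
    (hpd : (compMat A).PosDef)
    (κ : ℝ) (hκ : 0 < κ) (v : Fin N → ℝ) (hv : v ≠ 0)
    (heig : A *ᵥ v = κ • v)
    (w : Fin N → ℝ) (hw : compMat A *ᵥ w = 1) (i : Fin N) :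
    |v i| / ‖v‖ ≤ κ * w i := by
  have hnv : 0 < ‖v‖ := norm_pos_iff.mpr hv
  set av : Fin N → ℝ := fun j => |v j| with hav
  -- key bound: (A‡ |v|)_k ≤ κ |v_k|
  have hkey : ∀ k, (compMat A *ᵥ av) k ≤ κ * |v k| := by
    intro k
    have heigk : ∑ j, A k j * v j = κ * v k := by
      have := congrFun heig k
      simpa [mulVec, dotProduct] using this
    have htri : |A k k * v k| ≤ |κ * v k| + ∑ j ∈ Finset.univ.erase k, |A k j * v j| := by
      have h1 : A k k * v k = κ * v k - ∑ j ∈ Finset.univ.erase k, A k j * v j := by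
        rw [← heigk,
          ← Finset.add_sum_erase Finset.univ (fun j => A k j * v j) (Finset.mem_univ k)]
        ring
      rw [h1]
      calc |κ * v k - ∑ j ∈ Finset.univ.erase k, A k j * v j|
          ≤ |κ * v k| + |∑ j ∈ Finset.univ.erase k, A k j * v j| := abs_sub _ _
        _ ≤ |κ * v k| + ∑ j ∈ Finset.univ.erase k, |A k j * v j| := by
            gcongr; exact Finset.abs_sum_le_sum_abs _ _
    have hsum : (compMat A *ᵥ av) k
        = 2 * (|A k k| * |v k|) - ∑ j, |A k j| * |v j| := by
      have e1 : (compMat A *ᵥ av) k = ∑ j, compMat A k j * |v j| := rfl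
      rw [e1,
        ← Finset.add_sum_erase Finset.univ (fun j => compMat A k j * |v j|) (Finset.mem_univ k),
        ← Finset.add_sum_erase Finset.univ (fun j => |A k j| * |v j|) (Finset.mem_univ k)]
      have e2 : ∀ j ∈ Finset.univ.erase k, compMat A k j * |v j| = -(|A k j| * |v j|) := by
        intro j hj
        have hjk : ¬ k = j := fun h => (Finset.ne_of_mem_erase hj) h.symm
        simp [compMat, hjk]
      rw [Finset.sum_congr rfl e2, Finset.sum_neg_distrib]
      simp [compMat]
      ring
    rw [hsum]
    have herase : ∑ j ∈ Finset.univ.erase k, |A k j * v j|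
        = ∑ j, |A k j| * |v j| - |A k k| * |v k| := by
      rw [← Finset.add_sum_erase Finset.univ (fun j => |A k j| * |v j|) (Finset.mem_univ k)]
      simp [abs_mul]
    rw [herase, abs_mul, abs_mul, abs_of_pos hκ] at htri
    linarith
  -- x := κ‖v‖ w − |v| satisfies A‡ x ≥ 0
  set x : Fin N → ℝ := fun j => κ * ‖v‖ * w j - av j with hx
  have hBx : ∀ k, 0 ≤ (compMat A *ᵥ x) k := by
    intro k
    have hxe : x = (κ * ‖v‖) • w - av := by funext j; simp [hx, smul_eq_mul]
    rw [hxe, mulVec_sub, mulVec_smul, hw]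
    have h1 : |v k| ≤ ‖v‖ := by
      have := norm_le_pi_norm v k
      simpa [Real.norm_eq_abs] using this
    have h2 := hkey k
    simp only [Pi.sub_apply, Pi.smul_apply, Pi.one_apply, smul_eq_mul, mul_one]
    nlinarith
  have hoff : ∀ a b : Fin N, a ≠ b → compMat A a b ≤ 0 := by
    intro a b hab
    simp [compMat, hab, abs_nonneg]
  have hx0 := posdef_Z_monotone (compMat A) hpd hoff x hBx i
  simp only [hx] at hx0
  rw [div_le_iff₀ hnv]
  nlinarith [hx0]
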